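/- For real b₁ with 0 < b₁ < 1/4, and θ = √2(1 − 3√(1−4b₁))/4, k = √(1 + √(1−4b₁) − 2b₁)/4, m = √(2 + 2√(1−4b₁) − 4b₁)/4, the functions ψ(x,t) = e^{−x² + cos t}·[(3−√(1−4b₁))/4 − m·tanh(k(x−θt))] and φ(x,t) = e^{−x² + cos t}·[(1+√(1−4b₁))/4 + m·tanh(k(x−θt))] satisfy ψ_t = ψ_{xx} + (4x² + 2 − sin t − b₁)ψ + 4xψ_x − e^{2x² − 2cos t}ψφ² + b₁e^{−x² + cos t} and φ_t = φ_{xx} + (4x² + 2 − sin t − b₁)φ + 4xφ_x + e^{2x² − 2cos t}ψφ². -/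

import Mathlib

open Real

lemma tanh_hasDerivAt (z : ℝ) : HasDerivAt Real.tanh (1 - Real.tanh z ^ 2) z := by
  have hc : Real.cosh z ≠ 0 := (Real.cosh_pos z).ne'
  have h : HasDerivAt (fun w => Real.sinh w / Real.cosh w)
      ((Real.cosh z * Real.cosh z - Real.sinh z * Real.sinh z) / Real.cosh z ^ 2) z :=
    (Real.hasDerivAt_sinh z).div (Real.hasDerivAt_cosh z) hc
  have he : (fun w => Real.sinh w / Real.cosh w) = Real.tanh := by
    funext w; rw [Real.tanh_eq_sinh_div_cosh]
  rw [he] at h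
  convert h using 1
  rw [Real.tanh_eq_sinh_div_cosh]
  have h2 := Real.cosh_sq_sub_sinh_sq z
  field_simp

/-- t-derivative -/
lemma deriv_t (a m k θ x : ℝ) : ∀ t : ℝ,
    deriv (fun t => Real.exp (-x ^ 2 + Real.cos t) * (a + m * Real.tanh (k * (x - θ * t)))) t
      = Real.exp (-x ^ 2 + Real.cos t) *
        (-Real.sin t * (a + m * Real.tanh (k * (x - θ * t)))
          - m * (k * θ) * (1 - Real.tanh (k * (x - θ * t)) ^ 2)) := by
  intro t
  have h1 : HasDerivAt (fun t : ℝ => -x ^ 2 + Real.cos t) (-Real.sin t) t :=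
    (Real.hasDerivAt_cos t).const_add _
  have h2 := h1.exp
  have h3 : HasDerivAt (fun t : ℝ => k * (x - θ * t)) (k * -θ) t := by
    simpa using (((hasDerivAt_id t).const_mul θ).const_sub x).const_mul k
  have h4 : HasDerivAt (fun t : ℝ => Real.tanh (k * (x - θ * t)))
      ((1 - Real.tanh (k * (x - θ * t)) ^ 2) * (k * -θ)) t := by
    simpa [Function.comp_def] using (tanh_hasDerivAt (k * (x - θ * t))).comp t h3
  have h5 := (h4.const_mul m).const_add a
  have h6 := h2.mul h5
  exact h6.deriv.trans (by ring)

/-- first x-derivative -/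
lemma deriv_x (a m k θ t : ℝ) : ∀ y : ℝ,
    deriv (fun z => Real.exp (-z ^ 2 + Real.cos t) * (a + m * Real.tanh (k * (z - θ * t)))) y
      = Real.exp (-y ^ 2 + Real.cos t) *
        (-2 * y * (a + m * Real.tanh (k * (y - θ * t)))
          + m * k * (1 - Real.tanh (k * (y - θ * t)) ^ 2)) := by
  intro y
  have h1 : HasDerivAt (fun z : ℝ => -z ^ 2 + Real.cos t) (-(2 * y)) y := by
    have := ((hasDerivAt_pow 2 y).neg).add_const (Real.cos t)
    simpa using this
  have h2 := h1.exp
  have h3 : HasDerivAt (fun z : ℝ => k * (z - θ * t)) (k * 1) y := by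
    simpa using ((hasDerivAt_id y).sub_const (θ * t)).const_mul k
  have h4 : HasDerivAt (fun z : ℝ => Real.tanh (k * (z - θ * t)))
      ((1 - Real.tanh (k * (y - θ * t)) ^ 2) * (k * 1)) y := by
    simpa [Function.comp_def] using (tanh_hasDerivAt (k * (y - θ * t))).comp y h3
  have h5 := (h4.const_mul m).const_add a
  have h6 := h2.mul h5
  exact h6.deriv.trans (by ring)

/-- second x-derivative -/
lemma deriv_xx (a m k θ t : ℝ) : ∀ x : ℝ,
    deriv (fun y => Real.exp (-y ^ 2 + Real.cos t) *
        (-2 * y * (a + m * Real.tanh (k * (y - θ * t)))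
          + m * k * (1 - Real.tanh (k * (y - θ * t)) ^ 2))) x
      = Real.exp (-x ^ 2 + Real.cos t) *
        ((4 * x ^ 2 - 2) * (a + m * Real.tanh (k * (x - θ * t)))
          - 4 * x * m * k * (1 - Real.tanh (k * (x - θ * t)) ^ 2)
          - 2 * m * k ^ 2 * Real.tanh (k * (x - θ * t))
              * (1 - Real.tanh (k * (x - θ * t)) ^ 2)) := by
  intro x
  have h1 : HasDerivAt (fun z : ℝ => -z ^ 2 + Real.cos t) (-(2 * x)) x := by
    have := ((hasDerivAt_pow 2 x).neg).add_const (Real.cos t)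
    simpa using this
  have h2 := h1.exp
  have h3 : HasDerivAt (fun z : ℝ => k * (z - θ * t)) (k * 1) x := by
    simpa using ((hasDerivAt_id x).sub_const (θ * t)).const_mul k
  have h4 : HasDerivAt (fun z : ℝ => Real.tanh (k * (z - θ * t)))
      ((1 - Real.tanh (k * (x - θ * t)) ^ 2) * (k * 1)) x := by
    simpa [Function.comp_def] using (tanh_hasDerivAt (k * (x - θ * t))).comp x h3
  have h5 := (h4.const_mul m).const_add a
  have h6 : HasDerivAt (fun z : ℝ => -2 * z) (-2) x := by
    simpa using (hasDerivAt_id x).const_mul (-2 : ℝ)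
  have h7 := h6.mul h5
  have h8 := ((h4.pow 2).const_sub 1).const_mul (m * k)
  have h9 := h7.add h8
  have h10 := h2.mul h9
  refine h10.deriv.trans ?_
  simp only [Pi.mul_apply, Pi.add_apply, Pi.pow_apply]
  ring

lemma alg (E u S s k θ m b₁ : ℝ) (hm : m = (1 + s) / 4) (hb : b₁ = (1 - s ^ 2) / 4)
    (hkθ : k * θ = (1 + s) * (1 - 3 * s) / 16) (hk2 : k ^ 2 = (1 + s) ^ 2 / 32) :
    E * (m * (k * θ) * (1 - u ^ 2) - 2 * m * k ^ 2 * u * (1 - u ^ 2)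
      + ((3 - s) / 4 - m * u) * (b₁ + ((1 + s) / 4 + m * u) ^ 2) - b₁) = 0 := by
  subst hm hb
  linear_combination (E * (1 + s) * (1 - u ^ 2) / 4) * hkθ
    - (E * (1 + s) * u * (1 - u ^ 2) / 2) * hk2

theorem stmt16 (b₁ : ℝ) (hb₁ : 0 < b₁) (hb₁' : b₁ < 1 / 4)
    (θ k m : ℝ)
    (hθ : θ = Real.sqrt 2 * (1 - 3 * Real.sqrt (1 - 4 * b₁)) / 4)
    (hk : k = Real.sqrt (1 + Real.sqrt (1 - 4 * b₁) - 2 * b₁) / 4)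
    (hm : m = Real.sqrt (2 + 2 * Real.sqrt (1 - 4 * b₁) - 4 * b₁) / 4)
    (ψ φ : ℝ → ℝ → ℝ)
    (hψ : ψ = fun x t => Real.exp (-x ^ 2 + Real.cos t) *
      ((3 - Real.sqrt (1 - 4 * b₁)) / 4 - m * Real.tanh (k * (x - θ * t))))
    (hφ : φ = fun x t => Real.exp (-x ^ 2 + Real.cos t) *
      ((1 + Real.sqrt (1 - 4 * b₁)) / 4 + m * Real.tanh (k * (x - θ * t)))) :
    (∀ x t : ℝ, deriv (ψ x) t =
      deriv (fun y => deriv (fun z => ψ z t) y) x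
        + (4 * x ^ 2 + 2 - Real.sin t - b₁) * ψ x t
        + 4 * x * deriv (fun y => ψ y t) x
        - Real.exp (2 * x ^ 2 - 2 * Real.cos t) * ψ x t * (φ x t) ^ 2
        + b₁ * Real.exp (-x ^ 2 + Real.cos t)) ∧
    (∀ x t : ℝ, deriv (φ x) t =
      deriv (fun y => deriv (fun z => φ z t) y) x
        + (4 * x ^ 2 + 2 - Real.sin t - b₁) * φ x t
        + 4 * x * deriv (fun y => φ y t) x
        + Real.exp (2 * x ^ 2 - 2 * Real.cos t) * ψ x t * (φ x t) ^ 2) := by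
  set s := Real.sqrt (1 - 4 * b₁) with hs_def
  have h4b : (0:ℝ) < 1 - 4 * b₁ := by linarith
  have hs2 : s ^ 2 = 1 - 4 * b₁ := Real.sq_sqrt h4b.le
  have hs0 : 0 ≤ s := Real.sqrt_nonneg _
  have hb : b₁ = (1 - s ^ 2) / 4 := by linarith [hs2]
  -- m = (1+s)/4
  have hm' : m = (1 + s) / 4 := by
    rw [hm]
    have : 2 + 2 * s - 4 * b₁ = (1 + s) ^ 2 := by nlinarith [hs2]
    rw [this, Real.sqrt_sq (by linarith)]
  -- k = (1+s)/(4 * sqrt 2)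
  have hr2 : Real.sqrt 2 ^ 2 = 2 := Real.sq_sqrt (by norm_num)
  have hrpos : (0:ℝ) < Real.sqrt 2 := Real.sqrt_pos.mpr (by norm_num)
  have hk' : k = (1 + s) * Real.sqrt 2 / 8 := by
    rw [hk]
    have h1 : 1 + s - 2 * b₁ = ((1 + s) * Real.sqrt 2 / 2) ^ 2 := by
      field_simp
      nlinarith [hs2, hr2]
    rw [h1, Real.sqrt_sq (by positivity)]
    ring
  have hkθ : k * θ = (1 + s) * (1 - 3 * s) / 16 := by
    rw [hk', hθ]
    have : (1 + s) * Real.sqrt 2 / 8 * (Real.sqrt 2 * (1 - 3 * s) / 4)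
        = Real.sqrt 2 ^ 2 * ((1 + s) * (1 - 3 * s)) / 32 := by ring
    rw [this, hr2]; ring
  have hk2 : k ^ 2 = (1 + s) ^ 2 / 32 := by
    rw [hk']
    have : ((1 + s) * Real.sqrt 2 / 8) ^ 2 = Real.sqrt 2 ^ 2 * (1 + s) ^ 2 / 64 := by ring
    rw [this, hr2]; ring
  subst hψ hφ
  have hexp : ∀ x t : ℝ, Real.exp (2 * x ^ 2 - 2 * Real.cos t)
      * Real.exp (-x ^ 2 + Real.cos t) ^ 2 = 1 := by
    intro x t
    rw [← Real.exp_nat_mul, ← Real.exp_add, Real.exp_eq_one_iff]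
    push_cast; ring
  constructor
  · intro x t
    dsimp only
    have e1 : (fun t => Real.exp (-x ^ 2 + Real.cos t) *
        ((3 - s) / 4 - m * Real.tanh (k * (x - θ * t))))
        = (fun t => Real.exp (-x ^ 2 + Real.cos t) *
        ((3 - s) / 4 + (-m) * Real.tanh (k * (x - θ * t)))) := by
      funext t; ring
    rw [e1, deriv_t]
    have e2 : (fun y => deriv (fun z => Real.exp (-z ^ 2 + Real.cos t) *
        ((3 - s) / 4 - m * Real.tanh (k * (z - θ * t)))) y)
        = (fun y => Real.exp (-y ^ 2 + Real.cos t) *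
        (-2 * y * ((3 - s) / 4 + (-m) * Real.tanh (k * (y - θ * t)))
          + (-m) * k * (1 - Real.tanh (k * (y - θ * t)) ^ 2))) := by
      funext y
      have := deriv_x ((3 - s) / 4) (-m) k θ t y
      rw [← this]
      congr 1
      funext z; ring
    rw [e2, deriv_xx]
    have e3 : deriv (fun y => Real.exp (-y ^ 2 + Real.cos t) *
        ((3 - s) / 4 - m * Real.tanh (k * (y - θ * t)))) x
        = Real.exp (-x ^ 2 + Real.cos t) *
        (-2 * x * ((3 - s) / 4 + (-m) * Real.tanh (k * (x - θ * t)))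
          + (-m) * k * (1 - Real.tanh (k * (x - θ * t)) ^ 2)) := by
      have := deriv_x ((3 - s) / 4) (-m) k θ t x
      rw [← this]; congr 1; funext z; ring
    rw [e3]
    have key := alg (Real.exp (-x ^ 2 + Real.cos t)) (Real.tanh (k * (x - θ * t)))
      (Real.sin t) s k θ m b₁ hm' hb hkθ hk2
    have hE := hexp x t
    linear_combination key + (Real.exp (-x ^ 2 + Real.cos t) * ((3 - s) / 4
      - m * Real.tanh (k * (x - θ * t))) * ((1 + s) / 4
      + m * Real.tanh (k * (x - θ * t))) ^ 2) * hE
  · intro x t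
    dsimp only
    rw [deriv_t ((1 + s) / 4) m k θ x t]
    rw [show (fun y => deriv (fun z => Real.exp (-z ^ 2 + Real.cos t) *
        ((1 + s) / 4 + m * Real.tanh (k * (z - θ * t)))) y)
      = (fun y => Real.exp (-y ^ 2 + Real.cos t) *
        (-2 * y * ((1 + s) / 4 + m * Real.tanh (k * (y - θ * t)))
          + m * k * (1 - Real.tanh (k * (y - θ * t)) ^ 2)))
      from funext (deriv_x ((1 + s) / 4) m k θ t)]
    rw [deriv_xx ((1 + s) / 4) m k θ t x]
    rw [deriv_x ((1 + s) / 4) m k θ t x]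
    have key := alg (Real.exp (-x ^ 2 + Real.cos t)) (Real.tanh (k * (x - θ * t)))
      (Real.sin t) s k θ m b₁ hm' hb hkθ hk2
    have hE := hexp x t
    linear_combination -key - (Real.exp (-x ^ 2 + Real.cos t) * ((3 - s) / 4
      - m * Real.tanh (k * (x - θ * t))) * ((1 + s) / 4
      + m * Real.tanh (k * (x - θ * t))) ^ 2) * hE
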